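/- Let n ≥ 1, let J ∈ GL_n(ℂ), let c ∈ ℂ \ {0}, and let Ω ∈ ℂ^{n×n} satisfy Ω J + J Ω* = 0. If I − cΩ is invertible, then the matrix A = (I − cΩ)^{-1}(I + c̄Ω) satisfies A J A* = J; in particular A is invertible, i.e. the c-Cayley transform maps the Lie algebra 𝔤 into the quadratic Lie group G. -/

import Mathlib

open scoped Matrix
/-- The c-Cayley transform maps the Lie algebra
`𝔤 = {Ω : Ω J + J Ωᴴ = 0}` into the quadratic Lie group `G = {A : A J Aᴴ = J}`. -/
theorem cayley_maps_lie_algebra_into_quadratic_group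
    (n : ℕ) (hn : 1 ≤ n)
    (J : Matrix (Fin n) (Fin n) ℂ) (hJ : IsUnit J)
    (c : ℂ) (hc : c ≠ 0)
    (Ω : Matrix (Fin n) (Fin n) ℂ) (hΩ : Ω * J + J * Ωᴴ = 0)
    (hinv : IsUnit (1 - c • Ω)) :
    ((1 - c • Ω)⁻¹ * (1 + (starRingEnd ℂ c) • Ω)) * J *
        ((1 - c • Ω)⁻¹ * (1 + (starRingEnd ℂ c) • Ω))ᴴ = J ∧
      IsUnit ((1 - c • Ω)⁻¹ * (1 + (starRingEnd ℂ c) • Ω)) := by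
  have h1 : J * Ωᴴ = -(Ω * J) := by
    rw [eq_neg_iff_add_eq_zero, add_comm]; exact hΩ
  set B := 1 - c • Ω with hB
  set C := 1 + (starRingEnd ℂ c) • Ω with hC
  have key : C * J * Cᴴ = B * J * Bᴴ := by
    have hCd : Cᴴ = 1 + c • Ωᴴ := by
      simp [hC, Matrix.conjTranspose_add, Matrix.conjTranspose_smul]
    have hBd : Bᴴ = 1 - (starRingEnd ℂ c) • Ωᴴ := by
      simp [hB, Matrix.conjTranspose_sub, Matrix.conjTranspose_smul]
    rw [hCd, hBd, hC, hB]
    simp only [Matrix.mul_add, Matrix.add_mul, Matrix.mul_sub, Matrix.sub_mul,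
      Matrix.mul_smul, Matrix.smul_mul, Matrix.one_mul, Matrix.mul_one,
      smul_smul, h1, smul_neg]
    module
  have hBdet : IsUnit B.det := (Matrix.isUnit_iff_isUnit_det B).mp hinv
  have hBddet : IsUnit Bᴴ.det := by
    rw [Matrix.det_conjTranspose]; exact hBdet.star
  have hmain : (B⁻¹ * C) * J * (B⁻¹ * C)ᴴ = J := by
    rw [Matrix.conjTranspose_mul, Matrix.conjTranspose_nonsing_inv]
    calc B⁻¹ * C * J * (Cᴴ * Bᴴ⁻¹) = B⁻¹ * (C * J * Cᴴ) * Bᴴ⁻¹ := by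
          noncomm_ring
      _ = B⁻¹ * (B * J * Bᴴ) * Bᴴ⁻¹ := by rw [key]
      _ = (B⁻¹ * B) * J * (Bᴴ * Bᴴ⁻¹) := by noncomm_ring
      _ = J := by
          rw [Matrix.nonsing_inv_mul _ hBdet, Matrix.mul_nonsing_inv _ hBddet,
            Matrix.one_mul, Matrix.mul_one]
  refine ⟨hmain, ?_⟩
  have hJdet : IsUnit J.det := (Matrix.isUnit_iff_isUnit_det J).mp hJ
  refine (Matrix.isUnit_iff_isUnit_det _).mpr (Matrix.isUnit_det_of_right_inverse (B := J * (B⁻¹ * C)ᴴ * J⁻¹) ?_)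
  calc (B⁻¹ * C) * (J * (B⁻¹ * C)ᴴ * J⁻¹)
      = ((B⁻¹ * C) * J * (B⁻¹ * C)ᴴ) * J⁻¹ := by noncomm_ring
    _ = J * J⁻¹ := by rw [hmain]
    _ = 1 := Matrix.mul_nonsing_inv _ hJdet
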